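/- Let k be an odd positive integer such that X² − (k²+1)Y² = k² has two primitive (coprime) solutions (a, b) and (a′, b′) with (a, b) not equivalent to (a′, b′) nor to (a′, −b′). Then there exist coprime integers p, q > 1 with k = pq such that both p⁴ and q⁴ are primitively represented by the form X² − (k²+1)Y², i.e., there are coprime integers u, v with u² − (k²+1)v² = p⁴ and coprime integers u′, v′ with u′² − (k²+1)v′² = q⁴. -/

import Mathlib

/-- Equivalence of solutions `(x, y)` and `(x', y')` of `X² - d Y² = n`. -/
def solEquiv (d n x y x' y' : ℤ) : Prop :=
  x * x' ≡ d * (y * y') [ZMOD n] ∧ x * y' ≡ y * x' [ZMOD n]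

theorem stmt_14 (k a b a' b' : ℤ) (hk : 0 < k) (hodd : Odd k)
    (hab : IsCoprime a b) (hab' : IsCoprime a' b')
    (hsol : a ^ 2 - (k ^ 2 + 1) * b ^ 2 = k ^ 2)
    (hsol' : a' ^ 2 - (k ^ 2 + 1) * b' ^ 2 = k ^ 2)
    (hne : ¬ solEquiv (k ^ 2 + 1) (k ^ 2) a b a' b')
    (hne' : ¬ solEquiv (k ^ 2 + 1) (k ^ 2) a b a' (-b')) :
    ∃ p q u v u' v' : ℤ, 1 < p ∧ 1 < q ∧ IsCoprime p q ∧ k = p * q ∧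
      IsCoprime u v ∧ u ^ 2 - (k ^ 2 + 1) * v ^ 2 = p ^ 4 ∧
      IsCoprime u' v' ∧ u' ^ 2 - (k ^ 2 + 1) * v' ^ 2 = q ^ 4 := by
  set d : ℤ := k ^ 2 + 1 with hd
  -- the two compositions of the solutions
  -- A = a*a' + d*b*b', B = a*b' + b*a', A' = a*a' - d*b*b', B' = a*b' - b*a'
  have hnormA : (a*a' + d*(b*b'))^2 - d*(a*b' + b*a')^2 = k^4 := by
    calc (a*a' + d*(b*b'))^2 - d*(a*b' + b*a')^2
        = (a^2 - d*b^2) * (a'^2 - d*b'^2) := by ring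
      _ = k^2 * k^2 := by rw [hsol, hsol']
      _ = k^4 := by ring
  have hnormA' : (a*a' - d*(b*b'))^2 - d*(a*b' - b*a')^2 = k^4 := by
    calc (a*a' - d*(b*b'))^2 - d*(a*b' - b*a')^2
        = (a^2 - d*b^2) * (a'^2 - d*b'^2) := by ring
      _ = k^2 * k^2 := by rw [hsol, hsol']
      _ = k^4 := by ring
  have hAA' : k^2 ∣ (a*a' + d*(b*b')) * (a*a' - d*(b*b')) := by
    refine ⟨k^2 + d*(b^2 + b'^2), ?_⟩
    linear_combination (a'^2) * hsol + (d*b^2 + k^2) * hsol'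
  -- coprimality of d with k
  have hcopdk : IsCoprime d k := ⟨1, -k, by ring⟩
  -- key fact: no prime divisor of k divides both compositions
  have key : ∀ r : ℤ, Prime r → r ∣ k → r ∣ (a*a' + d*(b*b')) →
      r ∣ (a*a' - d*(b*b')) → False := by
    intro r hr hrk hrA hrA'
    have hrd : IsCoprime r d := (hcopdk.of_isCoprime_of_dvd_right hrk).symm
    have hrk4 : r ∣ k^4 := dvd_pow hrk (by norm_num)
    have hrB : r ∣ (a*b' + b*a') := by
      have h1 : r ∣ d * (a*b' + b*a')^2 := by
        have e : d * (a*b' + b*a')^2 = (a*a' + d*(b*b'))^2 - k^4 := by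
          linear_combination -hnormA
        rw [e]
        exact dvd_sub (dvd_pow hrA (by norm_num)) hrk4
      exact hr.dvd_of_dvd_pow (hrd.dvd_of_dvd_mul_left h1)
    have hrB' : r ∣ (a*b' - b*a') := by
      have h1 : r ∣ d * (a*b' - b*a')^2 := by
        have e : d * (a*b' - b*a')^2 = (a*a' - d*(b*b'))^2 - k^4 := by
          linear_combination -hnormA'
        rw [e]
        exact dvd_sub (dvd_pow hrA' (by norm_num)) hrk4
      exact hr.dvd_of_dvd_pow (hrd.dvd_of_dvd_mul_left h1)
    have hr2aa : r ∣ 2*(a*a') := by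
      have h := dvd_add hrA hrA'
      rwa [show (a*a' + d*(b*b')) + (a*a' - d*(b*b')) = 2*(a*a') from by ring] at h
    have hr2ab : r ∣ 2*(a*b') := by
      have h := dvd_add hrB hrB'
      rwa [show (a*b' + b*a') + (a*b' - b*a') = 2*(a*b') from by ring] at h
    have hrnot2 : ¬ r ∣ (2:ℤ) := by
      intro h2
      have hnp : r.natAbs.Prime := Int.prime_iff_natAbs_prime.mp hr
      have h2n : r.natAbs ∣ 2 := by
        have := Int.natAbs_dvd_natAbs.mpr h2; simpa using this
      have hr2 : r.natAbs = 2 := (Nat.prime_dvd_prime_iff_eq hnp Nat.prime_two).mp h2n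
      have hkd : r.natAbs ∣ k.natAbs := Int.natAbs_dvd_natAbs.mpr hrk
      have hko : Odd k.natAbs := Int.natAbs_odd.mpr hodd
      rw [hr2] at hkd
      obtain ⟨m, hm⟩ := hko
      omega
    have hraa : r ∣ a*a' := by
      rcases hr.dvd_or_dvd hr2aa with h | h
      · exact absurd h hrnot2
      · exact h
    have hrab : r ∣ a*b' := by
      rcases hr.dvd_or_dvd hr2ab with h | h
      · exact absurd h hrnot2
      · exact h
    have hna : ¬ r ∣ a := by
      intro ha
      have h1 : r ∣ d * b^2 := by
        have e : d * b^2 = a^2 - k^2 := by linear_combination -hsol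
        rw [e]
        exact dvd_sub (dvd_pow ha (by norm_num)) (dvd_pow hrk (by norm_num))
      have hb : r ∣ b := hr.dvd_of_dvd_pow (hrd.dvd_of_dvd_mul_left h1)
      exact hr.not_unit (hab.isUnit_of_dvd' ha hb)
    have ha' : r ∣ a' := (hr.dvd_or_dvd hraa).resolve_left hna
    have hb' : r ∣ b' := (hr.dvd_or_dvd hrab).resolve_left hna
    exact hr.not_unit (hab'.isUnit_of_dvd' ha' hb')
  -- split k² as a product of coprime divisors of A and A'
  obtain ⟨e₁, e₂, he₁, he₂, hee⟩ := exists_dvd_and_dvd_of_dvd_mul hAA'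
  set P1 : ℤ := |e₁| with hP1
  set Q1 : ℤ := |e₂| with hQ1
  have hP1A : P1 ∣ (a*a' + d*(b*b')) := (abs_dvd _ _).mpr he₁
  have hQ1A' : Q1 ∣ (a*a' - d*(b*b')) := (abs_dvd _ _).mpr he₂
  have hP1Q1 : P1 * Q1 = k^2 := by
    rw [hP1, hQ1, ← abs_mul, ← hee]
    exact abs_of_pos (by positivity)
  have hP1pos : 0 < P1 := by
    rcases (abs_nonneg e₁).lt_or_eq with h | h
    · exact h
    · exfalso; rw [hP1, ← h] at hP1Q1; simp at hP1Q1; nlinarith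
  have hQ1pos : 0 < Q1 := by nlinarith
  -- P1 and Q1 are coprime
  have hcop1 : IsCoprime P1 Q1 := by
    rw [Int.isCoprime_iff_gcd_eq_one]
    by_contra hg
    obtain ⟨r, hr, hrdvd⟩ := Int.exists_prime_and_dvd (n := (Int.gcd P1 Q1 : ℤ))
      (by simpa using hg)
    have hrP1 : r ∣ P1 := hrdvd.trans (Int.gcd_dvd_left _ _)
    have hrQ1 : r ∣ Q1 := hrdvd.trans (Int.gcd_dvd_right _ _)
    have hrk : r ∣ k := hr.dvd_of_dvd_pow (hP1Q1 ▸ Dvd.dvd.mul_right hrP1 Q1)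
    exact key r hr hrk (hrP1.trans hP1A) (hrQ1.trans hQ1A')
  -- they are squares
  obtain ⟨P0, hP0⟩ := Int.sq_of_isCoprime hcop1 hP1Q1
  obtain ⟨Q0, hQ0⟩ := Int.sq_of_isCoprime hcop1.symm (by rw [mul_comm]; exact hP1Q1)
  have hP0' : P1 = P0^2 := by
    rcases hP0 with h | h
    · exact h
    · exfalso; nlinarith [sq_nonneg P0]
  have hQ0' : Q1 = Q0^2 := by
    rcases hQ0 with h | h
    · exact h
    · exfalso; nlinarith [sq_nonneg Q0]
  set P : ℤ := |P0| with hPdef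
  set Q : ℤ := |Q0| with hQdef
  have hPsq : P^2 = P1 := by rw [hPdef, sq_abs, hP0']
  have hQsq : Q^2 = Q1 := by rw [hQdef, sq_abs, hQ0']
  have hPpos : 0 < P := by
    rcases (abs_nonneg P0).lt_or_eq with h | h
    · exact h
    · exfalso; rw [← hPsq, hPdef, ← h] at hP1pos; simp at hP1pos
  have hQpos : 0 < Q := by
    rcases (abs_nonneg Q0).lt_or_eq with h | h
    · exact h
    · exfalso; rw [← hQsq, hQdef, ← h] at hQ1pos; simp at hQ1pos
  have hk2 : k^2 = P^2 * Q^2 := by rw [hPsq, hQsq, hP1Q1]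
  have hPQ : P * Q = k := by
    have h : (P*Q - k) * (P*Q + k) = 0 := by linear_combination -hk2
    rcases mul_eq_zero.mp h with h | h
    · linarith
    · have := mul_pos hPpos hQpos; linarith
  have hPk : P ∣ k := ⟨Q, hPQ.symm⟩
  have hQk : Q ∣ k := ⟨P, by rw [← hPQ]; ring⟩
  have hPA : P^2 ∣ (a*a' + d*(b*b')) := hPsq ▸ hP1A
  have hQA' : Q^2 ∣ (a*a' - d*(b*b')) := hQsq ▸ hQ1A'
  have hPne : P ≠ 0 := ne_of_gt hPpos
  have hQne : Q ≠ 0 := ne_of_gt hQpos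
  have hk4 : (k:ℤ)^4 = P^4 * Q^4 := by
    have : (k^2)^2 = (P^2*Q^2)^2 := by rw [hk2]
    linear_combination this
  -- P² divides B, Q² divides B'
  have hcopPd : IsCoprime (P^4) d := ((hcopdk.of_isCoprime_of_dvd_right hPk).symm).pow_left
  have hcopQd : IsCoprime (Q^4) d := ((hcopdk.of_isCoprime_of_dvd_right hQk).symm).pow_left
  have hPB : P^2 ∣ (a*b' + b*a') := by
    have h1 : P^4 ∣ d * (a*b' + b*a')^2 := by
      have e : d * (a*b' + b*a')^2 = (a*a' + d*(b*b'))^2 - k^4 := by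
        linear_combination -hnormA
      rw [e]
      refine dvd_sub ?_ ?_
      · have : (P^2)^2 ∣ (a*a' + d*(b*b'))^2 := pow_dvd_pow_of_dvd hPA 2
        rwa [show ((P:ℤ)^2)^2 = P^4 from by ring] at this
      · rw [hk4]; exact Dvd.intro _ rfl
    have h2 : P^4 ∣ (a*b' + b*a')^2 := hcopPd.dvd_of_dvd_mul_left h1
    have h3 : (P^2)^2 ∣ (a*b' + b*a')^2 := by
      rwa [show ((P:ℤ)^2)^2 = P^4 from by ring]
    exact (Int.pow_dvd_pow_iff (by norm_num)).mp h3
  have hQB' : Q^2 ∣ (a*b' - b*a') := by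
    have h1 : Q^4 ∣ d * (a*b' - b*a')^2 := by
      have e : d * (a*b' - b*a')^2 = (a*a' - d*(b*b'))^2 - k^4 := by
        linear_combination -hnormA'
      rw [e]
      refine dvd_sub ?_ ?_
      · have : (Q^2)^2 ∣ (a*a' - d*(b*b'))^2 := pow_dvd_pow_of_dvd hQA' 2
        rwa [show ((Q:ℤ)^2)^2 = Q^4 from by ring] at this
      · rw [hk4]; exact Dvd.intro_left _ rfl
    have h2 : Q^4 ∣ (a*b' - b*a')^2 := hcopQd.dvd_of_dvd_mul_left h1
    have h3 : (Q^2)^2 ∣ (a*b' - b*a')^2 := by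
      rwa [show ((Q:ℤ)^2)^2 = Q^4 from by ring]
    exact (Int.pow_dvd_pow_iff (by norm_num)).mp h3
  -- P > 1 and Q > 1, else the solutions would be equivalent
  have hP1' : P ≠ 1 := by
    intro h1
    apply hne
    have hQk' : Q = k := by rw [← hPQ, h1, one_mul]
    constructor
    · rw [Int.modEq_iff_dvd]
      have : k^2 ∣ (a*a' - d*(b*b')) := by rw [← hQk']; exact hQA'
      have h := (dvd_neg).mpr this
      rwa [show -(a*a' - d*(b*b')) = d*(b*b') - a*a' from by ring] at h
    · rw [Int.modEq_iff_dvd]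
      have : k^2 ∣ (a*b' - b*a') := by rw [← hQk']; exact hQB'
      have h := (dvd_neg).mpr this
      rwa [show -(a*b' - b*a') = b*a' - a*b' from by ring] at h
  have hQ1' : Q ≠ 1 := by
    intro h1
    apply hne'
    have hPk' : P = k := by rw [← hPQ, h1, mul_one]
    constructor
    · rw [Int.modEq_iff_dvd]
      have : k^2 ∣ (a*a' + d*(b*b')) := by rw [← hPk']; exact hPA
      have h := (dvd_neg).mpr this
      rwa [show -(a*a' + d*(b*b')) = d*(b*(-b')) - a*a' from by ring] at h
    · rw [Int.modEq_iff_dvd]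
      have : k^2 ∣ (a*b' + b*a') := by rw [← hPk']; exact hPB
      rwa [show a*b' + b*a' = b*a' - a*(-b') from by ring] at this
  -- extract the quotients
  obtain ⟨u, hu⟩ := hPA
  obtain ⟨v, hv⟩ := hPB
  obtain ⟨u', hu'⟩ := hQA'
  obtain ⟨v', hv'⟩ := hQB'
  have hP4 : P^4 ≠ 0 := pow_ne_zero _ hPne
  have hQ4 : Q^4 ≠ 0 := pow_ne_zero _ hQne
  have hnu : u^2 - d*v^2 = Q^4 := by
    have e2 : P^4 * (u^2 - d*v^2) = P^4 * Q^4 := by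
      have e1 : (P^2*u)^2 - d*(P^2*v)^2 = k^4 := by rw [← hu, ← hv]; exact hnormA
      linear_combination e1 + hk4
    exact mul_left_cancel₀ hP4 e2
  have hnu' : u'^2 - d*v'^2 = P^4 := by
    have e2 : Q^4 * (u'^2 - d*v'^2) = Q^4 * P^4 := by
      have e1 : (Q^2*u')^2 - d*(Q^2*v')^2 = k^4 := by rw [← hu', ← hv']; exact hnormA'
      linear_combination e1 + hk4
    exact mul_left_cancel₀ hQ4 e2
  -- coprimality of the quotients
  have hcopuv : IsCoprime u v := by
    rw [Int.isCoprime_iff_gcd_eq_one]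
    by_contra hg
    obtain ⟨r, hr, hrdvd⟩ := Int.exists_prime_and_dvd (n := (Int.gcd u v : ℤ))
      (by simpa using hg)
    have hru : r ∣ u := hrdvd.trans (Int.gcd_dvd_left _ _)
    have hrv : r ∣ v := hrdvd.trans (Int.gcd_dvd_right _ _)
    have hrQ4 : r ∣ Q^4 := by
      rw [← hnu]
      exact dvd_sub (dvd_pow hru (by norm_num)) (Dvd.dvd.mul_left (dvd_pow hrv (by norm_num)) d)
    have hrQ : r ∣ Q := hr.dvd_of_dvd_pow hrQ4
    have hrk : r ∣ k := hrQ.trans hQk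
    have hrA : r ∣ (a*a' + d*(b*b')) := by
      rw [hu]; exact Dvd.dvd.mul_left hru (P^2)
    have hrA' : r ∣ (a*a' - d*(b*b')) := by
      rw [hu']; exact Dvd.dvd.mul_right (hrQ.trans (dvd_pow_self Q (by norm_num))) u'
    exact key r hr hrk hrA hrA'
  have hcopuv' : IsCoprime u' v' := by
    rw [Int.isCoprime_iff_gcd_eq_one]
    by_contra hg
    obtain ⟨r, hr, hrdvd⟩ := Int.exists_prime_and_dvd (n := (Int.gcd u' v' : ℤ))
      (by simpa using hg)
    have hru : r ∣ u' := hrdvd.trans (Int.gcd_dvd_left _ _)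
    have hrv : r ∣ v' := hrdvd.trans (Int.gcd_dvd_right _ _)
    have hrP4 : r ∣ P^4 := by
      rw [← hnu']
      exact dvd_sub (dvd_pow hru (by norm_num)) (Dvd.dvd.mul_left (dvd_pow hrv (by norm_num)) d)
    have hrP : r ∣ P := hr.dvd_of_dvd_pow hrP4
    have hrk : r ∣ k := hrP.trans hPk
    have hrA : r ∣ (a*a' + d*(b*b')) := by
      rw [hu]; exact Dvd.dvd.mul_right (hrP.trans (dvd_pow_self P (by norm_num))) u
    have hrA' : r ∣ (a*a' - d*(b*b')) := by
      rw [hu']; exact Dvd.dvd.mul_left hru (Q^2)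
    exact key r hr hrk hrA hrA'
  have hcopPQ : IsCoprime Q P := by
    have h1 : IsCoprime (P^2) (Q^2) := by rw [hPsq, hQsq]; exact hcop1
    have h2 : IsCoprime P (Q^2) := h1.of_isCoprime_of_dvd_left (dvd_pow_self P (by norm_num))
    exact (h2.of_isCoprime_of_dvd_right (dvd_pow_self Q (by norm_num))).symm
  refine ⟨Q, P, u, v, u', v', ?_, ?_, hcopPQ, ?_, hcopuv, hnu, hcopuv', hnu'⟩
  · rcases lt_or_eq_of_le (show (1:ℤ) ≤ Q from hQpos) with h | h
    · exact h
    · exact absurd h.symm hQ1'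
  · rcases lt_or_eq_of_le (show (1:ℤ) ≤ P from hPpos) with h | h
    · exact h
    · exact absurd h.symm hP1'
  · rw [← hPQ]; ring
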